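/- Let $\mu$ be an absolutely continuous probability measure on $\mathbb{R}$ with distribution function $F$, let $p>1$, and let $\psi:\mathbb{R}\to[0,\infty)$ be nonincreasing and measurable. Then $\int_{\mathbb{R}} \left(\frac{\int_{(-\infty,x]}\psi\,d\mu}{F(x)}\right)^p d\mu(x) \ge \frac{p}{p-1}\int_{\mathbb{R}} \psi(y)^p\big(1-F(y)^{p-1}\big)\,d\mu(y) \ge \int_{\mathbb{R}}\psi(y)^p\,d\mu(y)$. -/

import Mathlib

open MeasureTheory Set ENNReal


lemma four_point {a b c d : ℝ≥0∞} (h1 : c ≤ a) (h2 : d ≤ b) :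
    a * d + c * b ≤ a * b + c * d := by
  obtain ⟨e, rfl⟩ : ∃ e, a = c + e := ⟨a - c, by rw [add_tsub_cancel_of_le h1]⟩
  rw [add_mul, add_mul]
  calc c * d + e * d + c * b ≤ c * d + e * b + c * b := by
        gcongr
    _ = c * b + e * b + c * d := by ring

lemma chebyshev (μ : Measure ℝ) [IsProbabilityMeasure μ] {f g : ℝ → ℝ≥0∞}
    (hf : Antitone f) (hg : Antitone g) :
    (∫⁻ x, f x ∂μ) * (∫⁻ x, g x ∂μ) ≤ ∫⁻ x, f x * g x ∂μ := by
  have hfm : Measurable f := hf.measurable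
  have hgm : Measurable g := hg.measurable
  have key : ∀ x y, f x * g y + f y * g x ≤ f x * g x + f y * g y := by
    intro x y
    rcases le_total x y with h | h
    · exact four_point (hf h) (hg h)
    · have := four_point (hf h) (hg h)
      calc f x * g y + f y * g x = f y * g x + f x * g y := add_comm _ _
        _ ≤ f y * g y + f x * g x := this
        _ = f x * g x + f y * g y := add_comm _ _
  have main : (∫⁻ x, f x ∂μ) * (∫⁻ x, g x ∂μ) + (∫⁻ x, f x ∂μ) * (∫⁻ x, g x ∂μ)
      ≤ (∫⁻ x, f x * g x ∂μ) + (∫⁻ x, f x * g x ∂μ) := by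
    have e1 : (∫⁻ x, f x ∂μ) * (∫⁻ x, g x ∂μ) = ∫⁻ x, f x * ∫⁻ y, g y ∂μ ∂μ :=
      (lintegral_mul_const _ hfm).symm
    have e2 : (∫⁻ x, f x ∂μ) * (∫⁻ x, g x ∂μ) = ∫⁻ x, (∫⁻ y, f y ∂μ) * g x ∂μ := by
      rw [lintegral_const_mul _ hgm]
    calc (∫⁻ x, f x ∂μ) * (∫⁻ x, g x ∂μ) + (∫⁻ x, f x ∂μ) * (∫⁻ x, g x ∂μ)
        = ∫⁻ x, (f x * ∫⁻ y, g y ∂μ) + (∫⁻ y, f y ∂μ) * g x ∂μ := by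
          rw [lintegral_add_left (hfm.mul_const _), ← e1, ← e2]
      _ ≤ ∫⁻ x, (f x * g x + ∫⁻ y, f y * g y ∂μ) ∂μ := by
          refine lintegral_mono fun x => ?_
          calc (f x * ∫⁻ y, g y ∂μ) + (∫⁻ y, f y ∂μ) * g x
              = ∫⁻ y, f x * g y + f y * g x ∂μ := by
                rw [lintegral_add_left (hgm.const_mul (f x)),
                  lintegral_const_mul _ hgm, lintegral_mul_const _ hfm]
            _ ≤ ∫⁻ y, f x * g x + f y * g y ∂μ := lintegral_mono fun y => key x y
            _ = f x * g x + ∫⁻ y, f y * g y ∂μ := by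
                rw [lintegral_add_left measurable_const, lintegral_const,
                  measure_univ, mul_one]
      _ = (∫⁻ x, f x * g x ∂μ) + (∫⁻ x, f x * g x ∂μ) := by
          rw [lintegral_add_right _ measurable_const, lintegral_const,
            measure_univ, mul_one]
  by_contra hlt
  push_neg at hlt
  exact absurd main (by simpa using LT.lt.not_ge (ENNReal.add_lt_add hlt hlt))

lemma iUnion_Iic_sub (b : ℝ) : (⋃ n : ℕ, Iic (b - 1/(n+1))) = Iio b := by
  ext x
  simp only [mem_iUnion, mem_Iic, mem_Iio]
  constructor
  · rintro ⟨n, hn⟩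
    have : (0:ℝ) < 1/(n+1) := by positivity
    linarith
  · intro hx
    obtain ⟨n, hn⟩ := exists_nat_one_div_lt (sub_pos.mpr hx)
    exact ⟨n, by linarith⟩

lemma measure_Iio_eq (ν : Measure ℝ) (hatom : ∀ a, ν {a} = 0) (b : ℝ) :
    ν (Iio b) = ν (Iic b) := by
  refine le_antisymm (measure_mono Iio_subset_Iic_self) ?_
  rw [← Iio_union_right]
  exact (measure_union_le _ _).trans (by rw [hatom b, add_zero])

lemma monoIic (b : ℝ) : Monotone (fun n : ℕ => Iic (b - 1/(n+1))) := by
  intro m n hmn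
  refine Iic_subset_Iic.mpr ?_
  have h1 : (1:ℝ)/(n+1) ≤ 1/(m+1) := by
    apply one_div_le_one_div_of_le
    · positivity
    · exact_mod_cast by omega
  linarith

lemma monoIicNat : Monotone (fun n : ℕ => Iic (n:ℝ)) := by
  intro m n hmn
  exact Iic_subset_Iic.mpr (by exact_mod_cast hmn)

lemma cdf_set_le (ν : Measure ℝ) (hatom : ∀ a, ν {a} = 0) (c : ℝ≥0∞) :
    ν {x | ν (Iic x) ≤ c} ≤ c := by
  set T := {x | ν (Iic x) ≤ c} with hT
  rcases T.eq_empty_or_nonempty with hne | hne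
  · simp [hne]
  have hmono : ∀ {x y : ℝ}, x ≤ y → y ∈ T → x ∈ T := fun hxy hy =>
    le_trans (measure_mono (Iic_subset_Iic.mpr hxy)) hy
  by_cases hbd : BddAbove T
  · set b := sSup T with hb
    have hsub : T ⊆ Iic b := fun x hx => le_csSup hbd hx
    have hIio : ν (Iio b) ≤ c := by
      rw [← iUnion_Iic_sub b]
      rw [Directed.measure_iUnion]
      · refine iSup_le fun n => ?_
        have hpos : (0:ℝ) < 1/(n+1) := by positivity
        obtain ⟨y, hy, hlt⟩ := exists_lt_of_lt_csSup hne
          (show b - 1/(n+1) < b by linarith)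
        exact le_trans (measure_mono (Iic_subset_Iic.mpr hlt.le)) hy
      · exact (monoIic b).directed_le
    calc ν T ≤ ν (Iic b) := measure_mono hsub
      _ = ν (Iio b) := (measure_Iio_eq ν hatom b).symm
      _ ≤ c := hIio
  · have hall : ∀ x : ℝ, ν (Iic x) ≤ c := by
      intro x
      obtain ⟨y, hy, hlt⟩ := not_bddAbove_iff.mp hbd x
      exact le_trans (measure_mono (Iic_subset_Iic.mpr hlt.le)) hy
    calc ν T ≤ ν (⋃ n : ℕ, Iic (n:ℝ)) := measure_mono (fun x _ => by
          obtain ⟨n, hn⟩ := exists_nat_ge x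
          exact mem_iUnion.mpr ⟨n, hn⟩)
      _ = ⨆ n : ℕ, ν (Iic (n:ℝ)) := Directed.measure_iUnion monoIicNat.directed_le
      _ ≤ c := iSup_le fun n => hall n

lemma iInter_Iic_neg : (⋂ n : ℕ, Iic (-(n:ℝ))) = ∅ := by
  ext x
  simp only [mem_iInter, mem_Iic, mem_empty_iff_false, iff_false, not_forall]
  obtain ⟨n, hn⟩ := exists_nat_gt (-x)
  exact ⟨n, by push_neg; linarith⟩

lemma iInter_Iic_add (b : ℝ) : (⋂ n : ℕ, Iic (b + 1/(n+1))) = Iic b := by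
  ext x
  simp only [mem_iInter, mem_Iic]
  constructor
  · intro h
    by_contra hx
    push_neg at hx
    obtain ⟨n, hn⟩ := exists_nat_one_div_lt (sub_pos.mpr hx)
    have := h n
    linarith
  · intro h n
    have : (0:ℝ) < 1/(n+1) := by positivity
    linarith

lemma cdf_set_ge (ν : Measure ℝ) [IsFiniteMeasure ν] (hatom : ∀ a, ν {a} = 0) (c : ℝ≥0∞) :
    min c (ν univ) ≤ ν {x | ν (Iic x) ≤ c} := by
  set T := {x | ν (Iic x) ≤ c} with hT
  rcases le_or_gt (ν univ) c with h | h
  · have : T = univ := eq_univ_of_forall fun x => le_trans (measure_mono (subset_univ _)) h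
    rw [this]
    exact min_le_right _ _
  rcases eq_or_lt_of_le (zero_le : 0 ≤ c) with hc0 | hc0
  · simp [← hc0]
  have hmin : min c (ν univ) = c := min_eq_left h.le
  rw [hmin]
  -- T is nonempty
  have htendsto : Filter.Tendsto (fun n : ℕ => ν (Iic (-(n:ℝ)))) Filter.atTop (nhds 0) := by
    have := tendsto_measure_iInter_atTop (μ := ν) (s := fun n : ℕ => Iic (-(n:ℝ)))
      (fun n => nullMeasurableSet_Iic)
      (fun m n hmn => Iic_subset_Iic.mpr (by exact_mod_cast by omega))
      ⟨0, measure_ne_top ν _⟩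
    rwa [iInter_Iic_neg, measure_empty] at this
  obtain ⟨n0, hn0⟩ := (htendsto.eventually_lt_const hc0).exists
  have hne : T.Nonempty := ⟨-(n0:ℝ), hn0.le⟩
  -- T is bounded above
  have hsup : ν univ = ⨆ n : ℕ, ν (Iic (n:ℝ)) := by
    rw [← Directed.measure_iUnion monoIicNat.directed_le]
    congr 1
    exact (eq_univ_of_forall fun x => by
      obtain ⟨n, hn⟩ := exists_nat_ge x
      exact mem_iUnion.mpr ⟨n, hn⟩).symm
  have hbd : BddAbove T := by
    rw [hsup] at h
    obtain ⟨n, hn⟩ := lt_iSup_iff.mp h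
    refine ⟨n, fun x hx => ?_⟩
    by_contra hgt
    push_neg at hgt
    exact absurd (le_trans (measure_mono (Iic_subset_Iic.mpr hgt.le)) hx) hn.not_ge
  set b := sSup T with hb
  have hIicb : c ≤ ν (Iic b) := by
    by_contra hlt
    push_neg at hlt
    have htendsto2 : Filter.Tendsto (fun n : ℕ => ν (Iic (b + 1/(n+1)))) Filter.atTop
        (nhds (ν (Iic b))) := by
      have hanti : Antitone (fun n : ℕ => Iic (b + 1/(n+1))) := by
        intro m n hmn
        refine Iic_subset_Iic.mpr ?_
        have h1 : (1:ℝ)/(n+1) ≤ 1/(m+1) := by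
          apply one_div_le_one_div_of_le
          · positivity
          · exact_mod_cast by omega
        linarith
      have := tendsto_measure_iInter_atTop (μ := ν) (s := fun n : ℕ => Iic (b + 1/(n+1)))
        (fun n => nullMeasurableSet_Iic) hanti ⟨0, measure_ne_top ν _⟩
      rwa [iInter_Iic_add] at this
    obtain ⟨n, hn⟩ := (htendsto2.eventually_lt_const hlt).exists
    have : b + 1/(n+1) ∈ T := hn.le
    have hple := le_csSup hbd this
    have : (0:ℝ) < 1/(n+1) := by positivity
    linarith
  calc c ≤ ν (Iic b) := hIicb
    _ = ν (Iio b) := (measure_Iio_eq ν hatom b).symm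
    _ ≤ ν T := measure_mono fun x hx => by
        obtain ⟨y, hy, hlt⟩ := exists_lt_of_lt_csSup hne hx
        exact le_trans (measure_mono (Iic_subset_Iic.mpr hlt.le)) hy

lemma cdf_mono (ν : Measure ℝ) : Monotone (fun x => ν (Iic x)) :=
  fun _ _ hxy => measure_mono (Iic_subset_Iic.mpr hxy)

lemma cdf_real_meas (ν : Measure ℝ) : Measurable (fun x => (ν (Iic x)).toReal) :=
  ENNReal.measurable_toReal.comp (cdf_mono ν).measurable

lemma map_cdf (ν : Measure ℝ) [IsFiniteMeasure ν] (hatom : ∀ a, ν {a} = 0) :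
    Measure.map (fun x => (ν (Iic x)).toReal) ν
      = volume.restrict (Icc 0 (ν univ).toReal) := by
  set g := fun x => (ν (Iic x)).toReal with hg
  set M := (ν univ).toReal with hM
  have hgm : Measurable g := cdf_real_meas ν
  haveI : IsFiniteMeasure (Measure.map g ν) :=
    ⟨by rw [Measure.map_apply hgm MeasurableSet.univ]; exact measure_lt_top ν _⟩
  refine Measure.ext_of_Iic _ _ fun a => ?_
  have hicc : Icc 0 M ∩ Iic a = Icc 0 (min M a) := by
    rw [← Ici_inter_Iic, inter_assoc, Iic_inter_Iic, Ici_inter_Iic]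
  rw [Measure.map_apply hgm measurableSet_Iic,
    Measure.restrict_apply measurableSet_Iic, inter_comm, hicc,
    Real.volume_Icc]
  have hMnn : 0 ≤ M := ENNReal.toReal_nonneg
  rcases lt_or_ge a 0 with ha | ha
  · have h1 : g ⁻¹' Iic a = ∅ := by
      ext x
      simp only [mem_preimage, mem_Iic, mem_empty_iff_false, iff_false, not_le]
      exact lt_of_lt_of_le ha ENNReal.toReal_nonneg
    rw [h1, measure_empty]
    rw [ENNReal.ofReal_eq_zero.mpr]
    have : min M a ≤ a := min_le_right _ _
    linarith
  · have h1 : g ⁻¹' Iic a = {x | ν (Iic x) ≤ ENNReal.ofReal a} := by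
      ext x
      simp only [mem_preimage, mem_Iic, mem_setOf_eq]
      exact (ENNReal.le_ofReal_iff_toReal_le (measure_ne_top ν _) ha).symm
    rw [h1, sub_zero]
    have hνuniv : ν univ = ENNReal.ofReal M := (ENNReal.ofReal_toReal (measure_ne_top ν _)).symm
    refine le_antisymm ?_ ?_
    · rcases le_total M a with hMa | hMa
      · rw [min_eq_left hMa, ← hνuniv]
        exact measure_mono (subset_univ _)
      · rw [min_eq_right hMa]
        exact cdf_set_le ν hatom _
    · refine le_trans (le_min (ENNReal.ofReal_le_ofReal (min_le_right _ _)) ?_)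
        (cdf_set_ge ν hatom (ENNReal.ofReal a))
      rw [hνuniv]
      exact ENNReal.ofReal_le_ofReal (min_le_left _ _)

lemma lintegral_cdf_comp (ν : Measure ℝ) [IsFiniteMeasure ν] (hatom : ∀ a, ν {a} = 0)
    {h : ℝ → ℝ≥0∞} (hh : Measurable h) :
    ∫⁻ x, h ((ν (Iic x)).toReal) ∂ν = ∫⁻ t in Icc 0 (ν univ).toReal, h t := by
  rw [← map_cdf ν hatom, lintegral_map hh (cdf_real_meas ν)]

lemma lint_pow_Icc {M q : ℝ} (hM : 0 ≤ M) (hq : 0 < q) :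
    ∫⁻ t in Icc 0 M, ENNReal.ofReal t ^ q ∂volume
      = ENNReal.ofReal (M ^ (q + 1) / (q + 1)) := by
  have h1 : ∀ t ∈ Icc 0 M, ENNReal.ofReal t ^ q = ENNReal.ofReal (t ^ q) := fun t ht =>
    ENNReal.ofReal_rpow_of_nonneg ht.1 hq.le
  rw [setLIntegral_congr_fun measurableSet_Icc h1]
  have hcont : ContinuousOn (fun t : ℝ => t ^ q) (Icc 0 M) := fun t _ =>
    (Real.continuousAt_rpow_const t q (Or.inr hq.le)).continuousWithinAt
  have hint : IntegrableOn (fun t : ℝ => t ^ q) (Icc 0 M) volume :=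
    hcont.integrableOn_compact isCompact_Icc
  have hnn : 0 ≤ᵐ[volume.restrict (Icc 0 M)] fun t : ℝ => t ^ q := by
    filter_upwards [ae_restrict_mem measurableSet_Icc] with t ht
    exact Real.rpow_nonneg ht.1 q
  rw [← ofReal_integral_eq_lintegral_ofReal hint hnn]
  congr 1
  rw [integral_Icc_eq_integral_Ioc, ← intervalIntegral.integral_of_le hM,
    integral_rpow (Or.inl (by linarith))]
  rw [Real.zero_rpow (by linarith : q + 1 ≠ 0)]
  ring

lemma lint_inv_Icc {c p : ℝ} (hc : 0 < c) (hc1 : c ≤ 1) (hp : 1 < p) :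
    ∫⁻ t in Icc c 1, (ENNReal.ofReal t ^ p)⁻¹ ∂volume
      = ENNReal.ofReal ((c ^ (1 - p) - 1) / (p - 1)) := by
  have h1 : ∀ t ∈ Icc c 1, (ENNReal.ofReal t ^ p)⁻¹ = ENNReal.ofReal (t ^ (-p)) := by
    intro t ht
    have htpos : 0 < t := lt_of_lt_of_le hc ht.1
    rw [ENNReal.ofReal_rpow_of_nonneg htpos.le (by linarith : (0:ℝ) ≤ p),
      ← ENNReal.ofReal_inv_of_pos (Real.rpow_pos_of_pos htpos p),
      ← Real.rpow_neg htpos.le]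
  rw [setLIntegral_congr_fun measurableSet_Icc h1]
  have hcont : ContinuousOn (fun t : ℝ => t ^ (-p)) (Icc c 1) := fun t ht =>
    (Real.continuousAt_rpow_const t (-p) (Or.inl (lt_of_lt_of_le hc ht.1).ne')).continuousWithinAt
  have hint : IntegrableOn (fun t : ℝ => t ^ (-p)) (Icc c 1) volume :=
    hcont.integrableOn_compact isCompact_Icc
  have hnn : 0 ≤ᵐ[volume.restrict (Icc c 1)] fun t : ℝ => t ^ (-p) := by
    filter_upwards [ae_restrict_mem measurableSet_Icc] with t ht
    exact Real.rpow_nonneg (le_trans hc.le ht.1) _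
  rw [← ofReal_integral_eq_lintegral_ofReal hint hnn]
  congr 1
  rw [integral_Icc_eq_integral_Ioc, ← intervalIntegral.integral_of_le hc1,
    integral_rpow (Or.inr ⟨by linarith, by
      rw [Set.uIcc_of_le hc1]
      exact fun h => absurd h.1 (by linarith)⟩)]
  rw [Real.one_rpow]
  have he : -p + 1 = 1 - p := by ring
  rw [he, div_eq_div_iff (by linarith) (by linarith : p - 1 ≠ 0)]
  ring

lemma lemB (ν : Measure ℝ) [IsFiniteMeasure ν] (hatom : ∀ a, ν {a} = 0) {p : ℝ}
    (hp : 1 < p) :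
    ENNReal.ofReal p * ∫⁻ y, (ν (Iic y)) ^ (p - 1) ∂ν = (ν univ) ^ p := by
  set M := (ν univ).toReal with hM
  have hMnn : 0 ≤ M := ENNReal.toReal_nonneg
  have hmeas : Measurable (fun t : ℝ => ENNReal.ofReal t ^ (p - 1)) :=
    (ENNReal.continuous_rpow_const.measurable.comp ENNReal.measurable_ofReal)
  have h1 : ∫⁻ y, (ν (Iic y)) ^ (p - 1) ∂ν
      = ∫⁻ y, (fun t : ℝ => ENNReal.ofReal t ^ (p - 1)) ((ν (Iic y)).toReal) ∂ν := by
    refine lintegral_congr fun y => ?_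
    simp only [ENNReal.ofReal_toReal (measure_ne_top ν _)]
  rw [h1, lintegral_cdf_comp ν hatom hmeas, lint_pow_Icc hMnn (by linarith : (0:ℝ) < p - 1)]
  have h2 : p - 1 + 1 = p := by ring
  rw [h2, ← ENNReal.ofReal_mul (by linarith : (0:ℝ) ≤ p)]
  have h3 : p * (M ^ p / p) = M ^ p := by
    field_simp
  rw [h3, ← ENNReal.ofReal_rpow_of_nonneg hMnn (by linarith : (0:ℝ) ≤ p), hM,
    ENNReal.ofReal_toReal (measure_ne_top ν _)]

lemma stepA (μ : Measure ℝ) (hatomμ : ∀ a, μ {a} = 0)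
    {p : ℝ} (hp : 1 < p) {ψ : ℝ → ℝ≥0∞} (hψ : Measurable ψ) (hmono : Antitone ψ) (x : ℝ) :
    ENNReal.ofReal p * ∫⁻ y in Iic x, ψ y ^ p * (μ (Iic y)) ^ (p - 1) ∂μ
      ≤ (∫⁻ y in Iic x, ψ y ∂μ) ^ p := by
  by_cases hGx : (∫⁻ y in Iic x, ψ y ∂μ) = ∞
  · rw [hGx, ENNReal.top_rpow_of_pos (by linarith : (0:ℝ) < p)]
    exact le_top
  set ν := (μ.withDensity ψ).restrict (Iic x) with hν
  have hνapp : ∀ s : Set ℝ, MeasurableSet s → ν s = ∫⁻ y in s ∩ Iic x, ψ y ∂μ := by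
    intro s hs
    rw [hν, Measure.restrict_apply hs, withDensity_apply ψ (hs.inter measurableSet_Iic)]
  have hνuniv : ν univ = ∫⁻ y in Iic x, ψ y ∂μ := by
    rw [hνapp univ MeasurableSet.univ, univ_inter]
  haveI : IsFiniteMeasure ν := ⟨by rw [hνuniv]; exact lt_of_le_of_ne le_top hGx⟩
  have hatomν : ∀ a, ν {a} = 0 := by
    intro a
    rw [hνapp {a} (measurableSet_singleton a)]
    refine le_antisymm (le_trans (lintegral_mono_set inter_subset_left) ?_) zero_le
    rw [setLIntegral_measure_zero {a} _ (hatomμ a)]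
  have hB := lemB ν hatomν hp
  rw [hνuniv] at hB
  rw [← hB]
  refine mul_le_mul_right ?_ _
  have hνIic : ∀ y : ℝ, y ≤ x → ν (Iic y) = ∫⁻ z in Iic y, ψ z ∂μ := by
    intro y hy
    rw [hνapp (Iic y) measurableSet_Iic, inter_eq_left.mpr (Iic_subset_Iic.mpr hy)]
  have hνmeas : Measurable fun y => ν (Iic y) := (cdf_mono ν).measurable
  have hmeas2 : Measurable fun y : ℝ => ν (Iic y) ^ (p - 1) :=
    ENNReal.continuous_rpow_const.measurable.comp hνmeas
  have key : ∀ f : ℝ → ℝ≥0∞, Measurable f →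
      ∫⁻ y, f y ∂((μ.withDensity ψ).restrict (Iic x)) = ∫⁻ y in Iic x, ψ y * f y ∂μ := by
    intro f hf
    rw [restrict_withDensity measurableSet_Iic,
      lintegral_withDensity_eq_lintegral_mul _ hψ hf]
    rfl
  have hint : ∫⁻ y, (ν (Iic y)) ^ (p - 1) ∂ν
      = ∫⁻ y in Iic x, ψ y * (ν (Iic y)) ^ (p - 1) ∂μ := key _ hmeas2
  rw [hint]
  refine setLIntegral_mono (hψ.mul (ENNReal.continuous_rpow_const.measurable.comp hνmeas))
    fun y hy => ?_
  have hψF : ψ y * μ (Iic y) ≤ ∫⁻ z in Iic y, ψ z ∂μ := by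
    rw [← setLIntegral_const (Iic y) (ψ y)]
    exact setLIntegral_mono hψ fun z hz => hmono hz
  calc ψ y ^ p * μ (Iic y) ^ (p - 1)
      = ψ y * (ψ y ^ (p - 1) * μ (Iic y) ^ (p - 1)) := by
        have hsplit : ψ y ^ p = ψ y ^ (1 + (p - 1)) := by norm_num
        rw [hsplit, ENNReal.rpow_add_of_nonneg 1 (p - 1) zero_le_one (by linarith),
          ENNReal.rpow_one, mul_assoc]
    _ = ψ y * (ψ y * μ (Iic y)) ^ (p - 1) := by
        rw [ENNReal.mul_rpow_of_nonneg _ _ (by linarith : (0:ℝ) ≤ p - 1)]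
    _ ≤ ψ y * (∫⁻ z in Iic y, ψ z ∂μ) ^ (p - 1) :=
        mul_le_mul_right (ENNReal.rpow_le_rpow hψF (by linarith)) _
    _ = ψ y * (ν (Iic y)) ^ (p - 1) := by rw [hνIic y hy]

lemma tail_lb (μ : Measure ℝ) [IsProbabilityMeasure μ] (hatomμ : ∀ a, μ {a} = 0)
    {p : ℝ} (hp : 1 < p) {y : ℝ} (hFy : μ (Iic y) ≠ 0) :
    ENNReal.ofReal (((μ (Iic y)).toReal ^ (1 - p) - 1) / (p - 1))
      ≤ ∫⁻ x in Ici y, (μ (Iic x) ^ p)⁻¹ ∂μ := by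
  set c := (μ (Iic y)).toReal with hc
  have hcpos : 0 < c := ENNReal.toReal_pos hFy (measure_ne_top μ _)
  have hc1 : c ≤ 1 := by
    rw [hc, ← ENNReal.toReal_one]
    exact ENNReal.toReal_mono one_ne_top prob_le_one
  set H : ℝ → ℝ≥0∞ := (Ioi c).indicator (fun t => (ENNReal.ofReal t ^ p)⁻¹) with hH
  have hHmeas : Measurable H :=
    Measurable.indicator
      ((ENNReal.continuous_rpow_const.measurable.comp ENNReal.measurable_ofReal).inv)
      measurableSet_Ioi
  have step1 : ∫⁻ x, H ((μ (Iic x)).toReal) ∂μ ≤ ∫⁻ x in Ici y, (μ (Iic x) ^ p)⁻¹ ∂μ := by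
    rw [← lintegral_indicator measurableSet_Ici]
    refine lintegral_mono fun x => ?_
    by_cases hx : c < (μ (Iic x)).toReal
    · have hxy : x ∈ Ici y := by
        by_contra hxy
        simp only [mem_Ici, not_le] at hxy
        exact absurd (ENNReal.toReal_mono (measure_ne_top μ _)
          (measure_mono (Iic_subset_Iic.mpr hxy.le))) hx.not_ge
      rw [hH, indicator_of_mem (show (μ (Iic x)).toReal ∈ Ioi c from hx), indicator_of_mem hxy,
        ENNReal.ofReal_toReal (measure_ne_top μ _)]
    · rw [hH, indicator_of_notMem (show (μ (Iic x)).toReal ∉ Ioi c from hx)]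
      exact zero_le
  have step2 : ∫⁻ x, H ((μ (Iic x)).toReal) ∂μ = ∫⁻ t in Icc 0 1, H t ∂volume := by
    have := lintegral_cdf_comp μ hatomμ hHmeas
    rwa [measure_univ, ENNReal.toReal_one] at this
  have step3 : ∫⁻ t in Icc 0 1, H t ∂volume
      = ∫⁻ t in Icc c 1, (ENNReal.ofReal t ^ p)⁻¹ ∂volume := by
    rw [hH, lintegral_indicator measurableSet_Ioi,
      Measure.restrict_restrict measurableSet_Ioi]
    have hset : Ioi c ∩ Icc 0 1 = Ioc c 1 := by
      ext t
      simp only [mem_inter_iff, mem_Ioi, mem_Icc, mem_Ioc]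
      constructor
      · rintro ⟨h1, _, h3⟩; exact ⟨h1, h3⟩
      · rintro ⟨h1, h2⟩; exact ⟨h1, (hcpos.trans h1).le, h2⟩
    rw [hset]
    exact setLIntegral_congr Ioc_ae_eq_Icc
  calc ENNReal.ofReal ((c ^ (1 - p) - 1) / (p - 1))
      = ∫⁻ t in Icc c 1, (ENNReal.ofReal t ^ p)⁻¹ ∂volume := (lint_inv_Icc hcpos hc1 hp).symm
    _ = ∫⁻ x, H ((μ (Iic x)).toReal) ∂μ := by rw [step2, step3]
    _ ≤ _ := step1

lemma swap_step (μ : Measure ℝ) [IsProbabilityMeasure μ] {k w : ℝ → ℝ≥0∞}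
    (hk : Measurable k) (hw : Measurable w) :
    ∫⁻ x, (∫⁻ y in Iic x, k y ∂μ) * w x ∂μ
      = ∫⁻ y, k y * ∫⁻ x in Ici y, w x ∂μ ∂μ := by
  set Φ : ℝ × ℝ → ℝ≥0∞ :=
    fun q => ({q : ℝ × ℝ | q.2 ≤ q.1}).indicator (fun q => k q.2 * w q.1) q with hΦdef
  have hΦ : Measurable Φ :=
    Measurable.indicator ((hk.comp measurable_snd).mul (hw.comp measurable_fst))
      (measurableSet_le measurable_snd measurable_fst)
  have left : ∀ x, ∫⁻ y, Φ (x, y) ∂μ = (∫⁻ y in Iic x, k y ∂μ) * w x := by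
    intro x
    have h1 : (fun y => Φ (x, y)) = (Iic x).indicator (fun y => k y * w x) := by
      funext y
      by_cases hyx : y ≤ x
      · simp only [hΦdef]
        rw [indicator_of_mem (show ((x:ℝ),(y:ℝ)) ∈ {q : ℝ × ℝ | q.2 ≤ q.1} from hyx),
          indicator_of_mem (show y ∈ Iic x from hyx)]
      · simp only [hΦdef]
        rw [indicator_of_notMem (show ((x:ℝ),(y:ℝ)) ∉ {q : ℝ × ℝ | q.2 ≤ q.1} from hyx),
          indicator_of_notMem (show y ∉ Iic x from hyx)]
    rw [h1, lintegral_indicator measurableSet_Iic, lintegral_mul_const _ hk]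
  have right : ∀ y, ∫⁻ x, Φ (x, y) ∂μ = k y * ∫⁻ x in Ici y, w x ∂μ := by
    intro y
    have h1 : (fun x => Φ (x, y)) = (Ici y).indicator (fun x => k y * w x) := by
      funext x
      by_cases hyx : y ≤ x
      · simp only [hΦdef]
        rw [indicator_of_mem (show ((x:ℝ),(y:ℝ)) ∈ {q : ℝ × ℝ | q.2 ≤ q.1} from hyx),
          indicator_of_mem (show x ∈ Ici y from hyx)]
      · simp only [hΦdef]
        rw [indicator_of_notMem (show ((x:ℝ),(y:ℝ)) ∉ {q : ℝ × ℝ | q.2 ≤ q.1} from hyx),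
          indicator_of_notMem (show x ∉ Ici y from hyx)]
    rw [h1, lintegral_indicator measurableSet_Ici, lintegral_const_mul _ hw]
  calc ∫⁻ x, (∫⁻ y in Iic x, k y ∂μ) * w x ∂μ
      = ∫⁻ x, ∫⁻ y, Φ (x, y) ∂μ ∂μ := lintegral_congr fun x => (left x).symm
    _ = ∫⁻ y, ∫⁻ x, Φ (x, y) ∂μ ∂μ := lintegral_lintegral_swap hΦ.aemeasurable
    _ = ∫⁻ y, k y * ∫⁻ x in Ici y, w x ∂μ ∂μ := lintegral_congr fun y => right y

/-- Reverse Hardy inequality in probabilistic form, for an absolutely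
continuous probability measure `μ` with distribution function
`F x = μ (Iic x)` and a nonincreasing nonnegative `ψ`. -/
theorem probability_reverse_hardy (μ : Measure ℝ) [IsProbabilityMeasure μ]
    (hac : μ ≪ volume) (p : ℝ) (hp : 1 < p)
    (ψ : ℝ → ℝ≥0∞) (hψ : Measurable ψ) (hmono : Antitone ψ) :
    ENNReal.ofReal (p / (p - 1)) *
        (∫⁻ y, ψ y ^ p * (1 - μ (Iic y) ^ (p - 1)) ∂μ)
      ≤ ∫⁻ x, ((∫⁻ y in Iic x, ψ y ∂μ) / μ (Iic x)) ^ p ∂μ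
    ∧ (∫⁻ y, ψ y ^ p ∂μ)
      ≤ ENNReal.ofReal (p / (p - 1)) *
          ∫⁻ y, ψ y ^ p * (1 - μ (Iic y) ^ (p - 1)) ∂μ := by
  have hp0 : (0:ℝ) ≤ p := by linarith
  have hp1 : (0:ℝ) ≤ p - 1 := by linarith
  have hppos : (0:ℝ) < p := by linarith
  have hatomμ : ∀ a, μ {a} = 0 := fun a => hac Real.volume_singleton
  have hFm : Measurable fun x => μ (Iic x) := (cdf_mono μ).measurable
  have hψp_meas : Measurable fun x => ψ x ^ p :=
    ENNReal.continuous_rpow_const.measurable.comp hψ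
  have hFp_meas : Measurable fun x => (μ (Iic x)) ^ (p - 1) :=
    ENNReal.continuous_rpow_const.measurable.comp hFm
  have hA_meas : Measurable fun y => ψ y ^ p * (1 - μ (Iic y) ^ (p - 1)) :=
    hψp_meas.mul (measurable_const.sub hFp_meas)
  -- second inequality
  have hψp_anti : Antitone fun x => ψ x ^ p := fun a b hab =>
    ENNReal.rpow_le_rpow (hmono hab) hp0
  have hone_anti : Antitone fun x => 1 - (μ (Iic x)) ^ (p - 1) := fun a b hab =>
    tsub_le_tsub_left (ENNReal.rpow_le_rpow (cdf_mono μ hab) hp1) 1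
  have cheb := chebyshev μ hψp_anti hone_anti
  have hFint : ∫⁻ x, (μ (Iic x)) ^ (p - 1) ∂μ = ENNReal.ofReal (1/p) := by
    have hB := lemB μ hatomμ hp
    rw [measure_univ, ENNReal.one_rpow] at hB
    have h0 : ENNReal.ofReal p ≠ 0 := ne_of_gt (ENNReal.ofReal_pos.mpr hppos)
    calc ∫⁻ x, (μ (Iic x)) ^ (p - 1) ∂μ
        = (ENNReal.ofReal p)⁻¹ * (ENNReal.ofReal p * ∫⁻ x, (μ (Iic x)) ^ (p - 1) ∂μ) := by
          rw [← mul_assoc, ENNReal.inv_mul_cancel h0 ENNReal.ofReal_ne_top, one_mul]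
      _ = (ENNReal.ofReal p)⁻¹ := by rw [hB, mul_one]
      _ = ENNReal.ofReal (1/p) := by
          rw [← ENNReal.ofReal_inv_of_pos hppos, one_div]
  have hsub : ∫⁻ x, (1 - (μ (Iic x)) ^ (p - 1)) ∂μ = ENNReal.ofReal ((p - 1)/p) := by
    rw [lintegral_sub hFp_meas (by rw [hFint]; exact ENNReal.ofReal_ne_top)
      (ae_of_all _ fun x => ENNReal.rpow_le_one prob_le_one hp1)]
    rw [lintegral_one, measure_univ, hFint, ← ENNReal.ofReal_one,
      ← ENNReal.ofReal_sub _ (by positivity : (0:ℝ) ≤ 1/p)]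
    congr 1
    field_simp
  have hmul1 : ENNReal.ofReal (p/(p-1)) * ENNReal.ofReal ((p-1)/p) = 1 := by
    rw [← ENNReal.ofReal_mul (by positivity : (0:ℝ) ≤ p/(p-1))]
    rw [show p/(p-1) * ((p-1)/p) = 1 by
      rw [div_mul_div_comm, mul_comm (p-1) p]
      exact div_self (mul_ne_zero (ne_of_gt hppos) (ne_of_gt (by linarith : (0:ℝ) < p - 1)))]
    exact ENNReal.ofReal_one
  have second : (∫⁻ y, ψ y ^ p ∂μ)
      ≤ ENNReal.ofReal (p/(p-1)) * ∫⁻ y, ψ y ^ p * (1 - μ (Iic y) ^ (p - 1)) ∂μ := by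
    calc ∫⁻ y, ψ y ^ p ∂μ
        = ENNReal.ofReal (p/(p-1)) * (ENNReal.ofReal ((p-1)/p) * ∫⁻ y, ψ y ^ p ∂μ) := by
          rw [← mul_assoc, hmul1, one_mul]
      _ = ENNReal.ofReal (p/(p-1)) *
            ((∫⁻ y, ψ y ^ p ∂μ) * ∫⁻ x, (1 - (μ (Iic x)) ^ (p - 1)) ∂μ) := by
          rw [hsub, mul_comm (ENNReal.ofReal ((p-1)/p))]
      _ ≤ ENNReal.ofReal (p/(p-1)) * ∫⁻ y, ψ y ^ p * (1 - μ (Iic y) ^ (p - 1)) ∂μ :=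
          mul_le_mul_right cheb _
  -- first inequality
  have haeF : ∀ᵐ y ∂μ, μ (Iic y) ≠ 0 := by
    rw [ae_iff]
    simp only [ne_eq, not_not]
    refine le_antisymm (le_trans (measure_mono ?_) (cdf_set_le μ hatomμ 0)) zero_le
    exact fun a ha => le_of_eq ha
  set k : ℝ → ℝ≥0∞ := fun y => ψ y ^ p * (μ (Iic y)) ^ (p - 1) with hkdef
  have hkm : Measurable k := hψp_meas.mul hFp_meas
  have hwm : Measurable fun x => ((μ (Iic x)) ^ p)⁻¹ :=
    (ENNReal.continuous_rpow_const.measurable.comp hFm).inv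
  have hinner_meas : Measurable fun x => (∫⁻ y in Iic x, k y ∂μ) * ((μ (Iic x)) ^ p)⁻¹ := by
    have hmono2 : Monotone fun x : ℝ => ∫⁻ y in Iic x, k y ∂μ := fun a b hab =>
      lintegral_mono_set (Iic_subset_Iic.mpr hab)
    exact hmono2.measurable.mul hwm
  have step1 : ∀ x, ENNReal.ofReal p * ((∫⁻ y in Iic x, k y ∂μ) * ((μ (Iic x)) ^ p)⁻¹)
      ≤ ((∫⁻ y in Iic x, ψ y ∂μ) / μ (Iic x)) ^ p := by
    intro x
    rw [ENNReal.div_rpow_of_nonneg _ _ hp0, div_eq_mul_inv, ← mul_assoc]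
    exact mul_le_mul_left (stepA μ hatomμ hp hψ hmono x) _
  have step2 : ENNReal.ofReal p * ∫⁻ x, (∫⁻ y in Iic x, k y ∂μ) * ((μ (Iic x)) ^ p)⁻¹ ∂μ
      ≤ ∫⁻ x, ((∫⁻ y in Iic x, ψ y ∂μ) / μ (Iic x)) ^ p ∂μ := by
    rw [← lintegral_const_mul _ hinner_meas]
    exact lintegral_mono step1
  have step3 : ∫⁻ x, (∫⁻ y in Iic x, k y ∂μ) * ((μ (Iic x)) ^ p)⁻¹ ∂μ
      = ∫⁻ y, k y * ∫⁻ x in Ici y, ((μ (Iic x)) ^ p)⁻¹ ∂μ ∂μ := swap_step μ hkm hwm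
  have step4 : ∀ᵐ y ∂μ, ENNReal.ofReal (1/(p-1)) * (ψ y ^ p * (1 - μ (Iic y) ^ (p - 1)))
      ≤ k y * ∫⁻ x in Ici y, ((μ (Iic x)) ^ p)⁻¹ ∂μ := by
    filter_upwards [haeF] with y hFy
    set c := (μ (Iic y)).toReal with hc
    have hcpos : 0 < c := ENNReal.toReal_pos hFy (measure_ne_top μ _)
    have hFy_eq : μ (Iic y) = ENNReal.ofReal c := (ENNReal.ofReal_toReal (measure_ne_top μ _)).symm
    have hFyp : (μ (Iic y)) ^ (p - 1) = ENNReal.ofReal (c ^ (p - 1)) := by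
      rw [hFy_eq, ENNReal.ofReal_rpow_of_nonneg hcpos.le hp1]
    have hca : c ^ (p - 1) * c ^ (1 - p) = 1 := by
      rw [← Real.rpow_add hcpos]
      norm_num
    have hcle : c ^ (p - 1) ≤ 1 := by
      calc c ^ (p - 1) ≤ 1 ^ (p - 1) := by
            apply Real.rpow_le_rpow hcpos.le ?_ hp1
            rw [hc, ← ENNReal.toReal_one]
            exact ENNReal.toReal_mono one_ne_top prob_le_one
        _ = 1 := Real.one_rpow _
      
    have hsub2 : 1 - (μ (Iic y)) ^ (p - 1) = ENNReal.ofReal (1 - c ^ (p - 1)) := by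
      rw [hFyp, ← ENNReal.ofReal_one, ← ENNReal.ofReal_sub _ (Real.rpow_nonneg hcpos.le _)]
    have hkey : (1/(p-1)) * (1 - c ^ (p - 1)) = c ^ (p - 1) * ((c ^ (1 - p) - 1) / (p - 1)) := by
      have h2 : c ^ (p - 1) * (c ^ (1 - p) - 1) = 1 - c ^ (p - 1) := by
        rw [mul_sub, hca, mul_one]
      calc (1/(p-1)) * (1 - c ^ (p - 1)) = (1 - c ^ (p - 1))/(p-1) := by ring
        _ = (c ^ (p - 1) * (c ^ (1 - p) - 1))/(p-1) := by rw [h2]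
        _ = c ^ (p - 1) * ((c ^ (1 - p) - 1)/(p-1)) := by ring
    calc ENNReal.ofReal (1/(p-1)) * (ψ y ^ p * (1 - μ (Iic y) ^ (p - 1)))
        = ψ y ^ p * (ENNReal.ofReal (1/(p-1)) * ENNReal.ofReal (1 - c ^ (p - 1))) := by
          rw [hsub2]; ring
      _ = ψ y ^ p * (ENNReal.ofReal (c ^ (p - 1)) * ENNReal.ofReal ((c ^ (1 - p) - 1)/(p - 1))) := by
          rw [← ENNReal.ofReal_mul (by positivity : (0:ℝ) ≤ 1/(p-1)), hkey,
            ENNReal.ofReal_mul (Real.rpow_nonneg hcpos.le _)]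
      _ = k y * ENNReal.ofReal ((c ^ (1 - p) - 1)/(p - 1)) := by
          rw [hkdef, ← hFyp, mul_assoc]
      _ ≤ k y * ∫⁻ x in Ici y, ((μ (Iic x)) ^ p)⁻¹ ∂μ :=
          mul_le_mul_right (tail_lb μ hatomμ hp hFy) _
  have first : ENNReal.ofReal (p/(p-1)) * (∫⁻ y, ψ y ^ p * (1 - μ (Iic y) ^ (p - 1)) ∂μ)
      ≤ ∫⁻ x, ((∫⁻ y in Iic x, ψ y ∂μ) / μ (Iic x)) ^ p ∂μ := by
    calc ENNReal.ofReal (p/(p-1)) * (∫⁻ y, ψ y ^ p * (1 - μ (Iic y) ^ (p - 1)) ∂μ)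
        = ENNReal.ofReal p * (ENNReal.ofReal (1/(p-1)) *
            ∫⁻ y, ψ y ^ p * (1 - μ (Iic y) ^ (p - 1)) ∂μ) := by
          rw [← mul_assoc, ← ENNReal.ofReal_mul hp0]
          congr 2
          field_simp
      _ = ENNReal.ofReal p *
            ∫⁻ y, ENNReal.ofReal (1/(p-1)) * (ψ y ^ p * (1 - μ (Iic y) ^ (p - 1))) ∂μ := by
          rw [lintegral_const_mul _ hA_meas]
      _ ≤ ENNReal.ofReal p * ∫⁻ y, k y * ∫⁻ x in Ici y, ((μ (Iic x)) ^ p)⁻¹ ∂μ ∂μ :=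
          mul_le_mul_right (lintegral_mono_ae step4) _
      _ = ENNReal.ofReal p * ∫⁻ x, (∫⁻ y in Iic x, k y ∂μ) * ((μ (Iic x)) ^ p)⁻¹ ∂μ := by
          rw [step3]
      _ ≤ _ := step2
  exact ⟨first, second⟩
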